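/- All six eigenvalues of the matrix J(X₀), where X₀ = (0,0,0,0,0,0), are negative real numbers if and only if R₁ < 1, R₂ < 1 and R₃ < 1. Moreover, if Rᵢ > 1 for at least one i ∈ {1,2,3}, then J(X₀) has a positive real eigenvalue. -/

import Mathlib

open Polynomial Matrix

/-- Jacobian matrix of the HBV three-strain vector field at `x = (y₁,y₂,y₃,v₁,v₂,v₃)`. -/
noncomputable def Jhbv (α₁ α₂ α₃ δ₁ δ₂ δ₃ c p₁ p₂ q₂ q₃ r₃ : ℝ) (x : Fin 6 → ℝ) :
    Matrix (Fin 6) (Fin 6) ℝ :=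
  !![-(α₁ * x 3 + δ₁), -(α₁ * x 3), -(α₁ * x 3), α₁ * (1 - x 0 - x 1 - x 2), 0, 0;
     -(α₂ * x 4), -(α₂ * x 4 + δ₂), -(α₂ * x 4), 0, α₂ * (1 - x 0 - x 1 - x 2), 0;
     -(α₃ * x 5), -(α₃ * x 5), -(α₃ * x 5 + δ₃), 0, 0, α₃ * (1 - x 0 - x 1 - x 2);
     p₁, 0, 0, -c, 0, 0;
     p₂, q₂, 0, 0, -c, 0;
     0, q₃, r₃, 0, 0, -c]

private lemma quad_eq_aux (b d a₁ a₂ : ℝ) (h1 : a₁ + a₂ = -b) (h2 : a₁ * a₂ = d) :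
    (X : ℝ[X]) ^ 2 + C b * X + C d = (X - C a₁) * (X - C a₂) := by
  have hb : b = -(a₁ + a₂) := by linarith
  subst hb; subst h2
  simp only [C_neg, C_add, C_mul]
  ring

private lemma quad_roots_aux (δ c α t : ℝ) (hδ : 0 < δ) (hc : 0 < c) (hα : 0 < α)
    (ht : 0 < t) :
    ∃ a₁ a₂ : ℝ,
      ((X : ℝ[X]) ^ 2 + C (δ + c) * X + C (c * δ - α * t) = (X - C a₁) * (X - C a₂)) ∧
      a₂ < 0 ∧ (a₁ < 0 ↔ α * t / (c * δ) < 1) ∧ (1 < α * t / (c * δ) → 0 < a₁) := by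
  have hcd : 0 < c * δ := by positivity
  set s := Real.sqrt ((δ - c) ^ 2 + 4 * α * t) with hs
  have hs0 : 0 ≤ s := Real.sqrt_nonneg _
  have hssq : s ^ 2 = (δ - c) ^ 2 + 4 * α * t := Real.sq_sqrt (by positivity)
  have hdiv : α * t / (c * δ) < 1 ↔ α * t < c * δ := div_lt_one hcd
  have hdiv' : 1 < α * t / (c * δ) ↔ c * δ < α * t := one_lt_div hcd
  refine ⟨(-(δ + c) + s) / 2, (-(δ + c) - s) / 2,
    quad_eq_aux _ _ _ _ (by ring) (by nlinarith), by nlinarith, ?_, ?_⟩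
  · rw [hdiv]
    constructor
    · intro h; nlinarith
    · intro h; nlinarith [sq_nonneg (s - (δ + c))]
  · rw [hdiv']
    intro h; nlinarith [sq_nonneg (s + (δ + c))]

set_option maxHeartbeats 2000000 in
set_option maxRecDepth 20000 in
private lemma jhbv_charpoly (α₁ α₂ α₃ δ₁ δ₂ δ₃ c p₁ p₂ q₂ q₃ r₃ : ℝ) :
    (Jhbv α₁ α₂ α₃ δ₁ δ₂ δ₃ c p₁ p₂ q₂ q₃ r₃ ![0, 0, 0, 0, 0, 0]).charpoly =
      (X ^ 2 + C (δ₁ + c) * X + C (c * δ₁ - α₁ * p₁)) *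
      ((X ^ 2 + C (δ₂ + c) * X + C (c * δ₂ - α₂ * q₂)) *
       (X ^ 2 + C (δ₃ + c) * X + C (c * δ₃ - α₃ * r₃))) := by
  have hcm : charmatrix (Jhbv α₁ α₂ α₃ δ₁ δ₂ δ₃ c p₁ p₂ q₂ q₃ r₃ ![0,0,0,0,0,0]) =
     !![X + C δ₁, 0, 0, -C α₁, 0, 0;
        0, X + C δ₂, 0, 0, -C α₂, 0;
        0, 0, X + C δ₃, 0, 0, -C α₃;
        -C p₁, 0, 0, X + C c, 0, 0;
        -C p₂, -C q₂, 0, 0, X + C c, 0;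
        0, -C q₃, -C r₃, 0, 0, X + C c] := by
    ext i j : 2
    fin_cases i <;> fin_cases j <;>
      simp [charmatrix_apply, Jhbv, sub_neg_eq_add, Matrix.one_apply, Matrix.vecHead,
        Matrix.vecTail, Function.comp, Matrix.diagonal_apply, Fin.ext_iff, Fin.val_succ,
        show ((1:Fin 6):ℕ)=1 from rfl, show ((2:Fin 6):ℕ)=2 from rfl,
        show ((3:Fin 6):ℕ)=3 from rfl, show ((4:Fin 6):ℕ)=4 from rfl,
        show ((5:Fin 6):ℕ)=5 from rfl, Matrix.cons_val_succ, Fin.isValue,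
        show ((5:Fin 6)) = Fin.succ 4 from rfl, show ((4:Fin 6)) = Fin.succ 3 from rfl]
    all_goals (rw [if_neg (by decide)]; simp)
  rw [Matrix.charpoly, hcm]
  simp [Matrix.det_succ_row_zero, Fin.sum_univ_succ, Fin.succAbove]
  ring

/-- all six eigenvalues of J(X₀) are negative real numbers iff R₁ < 1,
R₂ < 1 and R₃ < 1; moreover if some Rᵢ > 1 then J(X₀) has a positive real eigenvalue. -/
theorem stmt_2 (α₁ α₂ α₃ δ₁ δ₂ δ₃ c p₁ p₂ q₂ q₃ r₃ : ℝ)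
    (hα₁ : 0 < α₁) (hα₂ : 0 < α₂) (hα₃ : 0 < α₃)
    (hδ₁ : 0 < δ₁) (hδ₂ : 0 < δ₂) (hδ₃ : 0 < δ₃) (hc : 0 < c)
    (hp₁ : 0 < p₁) (hp₂ : 0 < p₂) (hq₂ : 0 < q₂) (hq₃ : 0 < q₃) (hr₃ : 0 < r₃) :
    let R₁ : ℝ := α₁ * p₁ / (c * δ₁)
    let R₂ : ℝ := α₂ * q₂ / (c * δ₂)
    let R₃ : ℝ := α₃ * r₃ / (c * δ₃)
    let M := Jhbv α₁ α₂ α₃ δ₁ δ₂ δ₃ c p₁ p₂ q₂ q₃ r₃ ![0, 0, 0, 0, 0, 0]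
    ((∀ μ ∈ (M.charpoly.map (algebraMap ℝ ℂ)).roots, μ.re < 0 ∧ μ.im = 0) ↔
        R₁ < 1 ∧ R₂ < 1 ∧ R₃ < 1) ∧
      ((1 < R₁ ∨ 1 < R₂ ∨ 1 < R₃) → ∃ μ : ℝ, M.charpoly.IsRoot μ ∧ 0 < μ) := by
  intro R₁ R₂ R₃ M
  obtain ⟨a₁, a₂, hfac1, ha₂, ha₁iff, ha₁pos⟩ := quad_roots_aux δ₁ c α₁ p₁ hδ₁ hc hα₁ hp₁
  obtain ⟨b₁, b₂, hfac2, hb₂, hb₁iff, hb₁pos⟩ := quad_roots_aux δ₂ c α₂ q₂ hδ₂ hc hα₂ hq₂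
  obtain ⟨c₁, c₂, hfac3, hc₂, hc₁iff, hc₁pos⟩ := quad_roots_aux δ₃ c α₃ r₃ hδ₃ hc hα₃ hr₃
  have hM : M.charpoly = (X - C a₁) * (X - C a₂) *
      ((X - C b₁) * (X - C b₂) * ((X - C c₁) * (X - C c₂))) := by
    show (Jhbv α₁ α₂ α₃ δ₁ δ₂ δ₃ c p₁ p₂ q₂ q₃ r₃ ![0,0,0,0,0,0]).charpoly = _
    rw [jhbv_charpoly, hfac1, hfac2, hfac3]
  have hroots : (M.charpoly.map (algebraMap ℝ ℂ)).roots =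
      ({(a₁ : ℂ), (a₂ : ℂ), (b₁ : ℂ), (b₂ : ℂ), (c₁ : ℂ), (c₂ : ℂ)} : Multiset ℂ) := by
    have hmap : M.charpoly.map (algebraMap ℝ ℂ) =
        (({(a₁ : ℂ), (a₂ : ℂ), (b₁ : ℂ), (b₂ : ℂ), (c₁ : ℂ), (c₂ : ℂ)} : Multiset ℂ).map
          fun a => X - C a).prod := by
      rw [hM]
      simp only [Polynomial.map_mul, Polynomial.map_sub, Polynomial.map_X, Polynomial.map_C,
        Complex.coe_algebraMap, Multiset.insert_eq_cons, Multiset.map_cons,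
        Multiset.map_singleton, Multiset.prod_cons, Multiset.prod_singleton]
      ring
    rw [hmap, Polynomial.roots_multiset_prod_X_sub_C]
  constructor
  · constructor
    · intro h
      have h1 := h (a₁ : ℂ) (by rw [hroots]; simp)
      have h2 := h (b₁ : ℂ) (by rw [hroots]; simp)
      have h3 := h (c₁ : ℂ) (by rw [hroots]; simp)
      exact ⟨ha₁iff.1 (by simpa using h1.1), hb₁iff.1 (by simpa using h2.1),
        hc₁iff.1 (by simpa using h3.1)⟩
    · rintro ⟨hR1, hR2, hR3⟩ μ hμ
      rw [hroots] at hμ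
      simp only [Multiset.insert_eq_cons, Multiset.mem_cons, Multiset.mem_singleton] at hμ
      rcases hμ with rfl | rfl | rfl | rfl | rfl | rfl
      · exact ⟨by simpa using ha₁iff.2 hR1, by simp⟩
      · exact ⟨by simpa using ha₂, by simp⟩
      · exact ⟨by simpa using hb₁iff.2 hR2, by simp⟩
      · exact ⟨by simpa using hb₂, by simp⟩
      · exact ⟨by simpa using hc₁iff.2 hR3, by simp⟩
      · exact ⟨by simpa using hc₂, by simp⟩
  · rintro (h | h | h)
    · exact ⟨a₁, by rw [Polynomial.IsRoot, hM]; simp, ha₁pos h⟩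
    · exact ⟨b₁, by rw [Polynomial.IsRoot, hM]; simp, hb₁pos h⟩
    · exact ⟨c₁, by rw [Polynomial.IsRoot, hM]; simp, hc₁pos h⟩
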